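/- Uniform boundedness of the multilevel cost sum for strong order q > 1/2: let T > 0, c > 0, q > 1/2, and let M ≥ 2 be an integer. Set h_l = T·M^{−l} for l ∈ ℕ, and suppose 0 ≤ V_l ≤ c·h_l^{2q} for all l. Then for every L ∈ ℕ, Σ_{l=0}^{L} √(V_l/h_l) ≤ √c · T^{q−1/2} / (1 − M^{−(q−1/2)}); in particular the sums Σ_{l=0}^{L} √(V_l/h_l) are bounded uniformly in L, so the multilevel cost (2/ε²)(1+1/M)(Σ_{l=0}^{L} √(V_l/h_l))² is O(ε^{−2}) uniformly in L. -/
import Mathlib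


open MeasureTheory ProbabilityTheory

private lemma geom_sum_le_aux {r : ℝ} (h0 : 0 ≤ r) (h1 : r < 1) (n : ℕ) :
    ∑ i ∈ Finset.range n, r ^ i ≤ 1 / (1 - r) := by
  have hr : (0:ℝ) < 1 - r := by linarith
  rw [geom_sum_eq (ne_of_lt h1)]
  have heq : (r ^ n - 1) / (r - 1) = (1 - r ^ n) / (1 - r) := by
    rw [← neg_sub (r ^ n) 1, ← neg_sub r 1, neg_div_neg_eq]
  rw [heq]
  have hpn : (0:ℝ) ≤ r ^ n := pow_nonneg h0 n
  gcongr
  linarith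

theorem multilevel_cost_sum_uniformly_bounded
    (T c q : ℝ) (hT : 0 < T) (hc : 0 < c) (hq : 1 / 2 < q)
    (M : ℕ) (hM : 2 ≤ M) (V : ℕ → ℝ)
    (hV0 : ∀ l, 0 ≤ V l)
    (hV : ∀ l : ℕ, V l ≤ c * (T / (M : ℝ) ^ l) ^ (2 * q)) :
    (∀ L : ℕ, ∑ l ∈ Finset.range (L + 1), Real.sqrt (V l / (T / (M : ℝ) ^ l))
      ≤ Real.sqrt c * T ^ (q - 1 / 2) / (1 - (M : ℝ) ^ (-(q - 1 / 2)))) ∧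
    ∃ C : ℝ, 0 < C ∧ ∀ ε : ℝ, 0 < ε → ∀ L : ℕ,
      2 / ε ^ 2 * (1 + 1 / (M : ℝ))
        * (∑ l ∈ Finset.range (L + 1), Real.sqrt (V l / (T / (M : ℝ) ^ l))) ^ 2
      ≤ C / ε ^ 2 := by
  have hM1 : (1:ℝ) < (M:ℝ) := by exact_mod_cast Nat.lt_of_lt_of_le one_lt_two hM
  have hM0 : (0:ℝ) < (M:ℝ) := by linarith
  set r : ℝ := (M : ℝ) ^ (-(q - 1 / 2)) with hr
  have hr0 : 0 ≤ r := Real.rpow_nonneg (le_of_lt hM0) _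
  have hr1 : r < 1 := by
    rw [hr]
    apply Real.rpow_lt_one_of_one_lt_of_neg hM1
    linarith
  have hrpos : 0 < 1 - r := by linarith
  set B : ℝ := Real.sqrt c * T ^ (q - 1 / 2) / (1 - r) with hB
  have hBpos : 0 < B := by
    apply div_pos _ hrpos
    exact mul_pos (Real.sqrt_pos.mpr hc) (Real.rpow_pos_of_pos hT _)
  have key : ∀ L : ℕ, ∑ l ∈ Finset.range (L + 1), Real.sqrt (V l / (T / (M : ℝ) ^ l)) ≤ B := by
    intro L
    have hterm : ∀ l : ℕ, Real.sqrt (V l / (T / (M : ℝ) ^ l))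
        ≤ Real.sqrt c * T ^ (q - 1 / 2) * r ^ l := by
      intro l
      have hMl : (0:ℝ) < (M:ℝ) ^ l := pow_pos hM0 l
      have hh : (0:ℝ) < T / (M:ℝ) ^ l := div_pos hT hMl
      have h1 : V l / (T / (M : ℝ) ^ l) ≤ c * (T / (M:ℝ) ^ l) ^ (2 * q) / (T / (M:ℝ) ^ l) :=
        div_le_div_of_nonneg_right (hV l) hh.le
      calc Real.sqrt (V l / (T / (M : ℝ) ^ l))
          ≤ Real.sqrt (c * (T / (M:ℝ) ^ l) ^ (2 * q) / (T / (M:ℝ) ^ l)) :=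
            Real.sqrt_le_sqrt h1
        _ = Real.sqrt c * T ^ (q - 1 / 2) * r ^ l := by
            rw [mul_div_assoc, Real.sqrt_mul hc.le]
            have h2 : (T / (M:ℝ) ^ l) ^ (2 * q) / (T / (M:ℝ) ^ l)
                = ((T / (M:ℝ) ^ l) ^ (q - 1/2)) ^ (2:ℕ) := by
              rw [← Real.rpow_natCast ((T / (M:ℝ) ^ l) ^ (q - 1/2)) 2,
                ← Real.rpow_mul hh.le]
              rw [show (T / (M:ℝ) ^ l) ^ (2 * q) / (T / (M:ℝ) ^ l)
                  = (T / (M:ℝ) ^ l) ^ (2 * q) / (T / (M:ℝ) ^ l) ^ (1:ℝ) by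
                rw [Real.rpow_one]]
              rw [← Real.rpow_sub hh]
              norm_num
              ring_nf
            rw [h2, Real.sqrt_sq (Real.rpow_nonneg hh.le _)]
            have h3 : (T / (M:ℝ) ^ l) ^ (q - 1/2) = T ^ (q - 1/2) * r ^ l := by
              rw [Real.div_rpow hT.le (pow_pos hM0 l).le, div_eq_mul_inv]
              congr 1
              rw [hr, ← Real.rpow_natCast ((M:ℝ) ^ (-(q - 1/2))) l,
                ← Real.rpow_mul hM0.le,
                ← Real.rpow_natCast (M:ℝ) l, ← Real.rpow_mul hM0.le,
                ← Real.rpow_neg hM0.le]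
              ring_nf
            rw [h3]; ring
    calc ∑ l ∈ Finset.range (L + 1), Real.sqrt (V l / (T / (M : ℝ) ^ l))
        ≤ ∑ l ∈ Finset.range (L + 1), Real.sqrt c * T ^ (q - 1 / 2) * r ^ l :=
          Finset.sum_le_sum fun l _ => hterm l
      _ = Real.sqrt c * T ^ (q - 1 / 2) * ∑ l ∈ Finset.range (L + 1), r ^ l := by
          rw [Finset.mul_sum]
      _ ≤ Real.sqrt c * T ^ (q - 1 / 2) * (1 / (1 - r)) := by
          apply mul_le_mul_of_nonneg_left (geom_sum_le_aux hr0 hr1 _)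
          positivity
      _ = B := by rw [hB]; ring
  refine ⟨key, ⟨2 * (1 + 1 / (M:ℝ)) * B ^ 2, ?_, ?_⟩⟩
  · positivity
  · intro ε hε L
    have hsum0 : 0 ≤ ∑ l ∈ Finset.range (L + 1), Real.sqrt (V l / (T / (M : ℝ) ^ l)) :=
      Finset.sum_nonneg fun l _ => Real.sqrt_nonneg _
    have hsq : (∑ l ∈ Finset.range (L + 1), Real.sqrt (V l / (T / (M : ℝ) ^ l))) ^ 2 ≤ B ^ 2 :=
      pow_le_pow_left₀ hsum0 (key L) 2
    have hε2 : (0:ℝ) < ε ^ 2 := by positivity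
    rw [div_mul_eq_mul_div, div_mul_eq_mul_div, div_le_div_iff₀ hε2 hε2]
    have h1M : (0:ℝ) ≤ 1 + 1 / (M:ℝ) := by positivity
    nlinarith [mul_le_mul_of_nonneg_right hsq hε2.le, mul_le_mul_of_nonneg_left
      (mul_le_mul_of_nonneg_right hsq hε2.le) (by positivity : (0:ℝ) ≤ 2 * (1 + 1/(M:ℝ)))]
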